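/- For all x > 0, (x − sin x)/x² ≤ 1/π, with equality at x = π; equivalently, sup_{x>0} 2(x − sin x)/x² = 2/π. -/

import Mathlib

open Real

lemma key_ineq : ∀ x : ℝ, 0 < x → (x - Real.sin x) / x ^ 2 ≤ 1 / Real.pi := by
  intro x hx
  rw [div_le_div_iff₀ (by positivity) Real.pi_pos]
  have hpi1 : (3.141592 : ℝ) < π := Real.pi_gt_d6
  have hpi2 : π < 3.15 := Real.pi_lt_d2
  rcases le_or_gt x 1 with h1 | h1
  · have := Real.sin_gt_sub_cube hx
    nlinarith [sq_nonneg x, pow_pos hx 3]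
  rcases le_or_gt x (π - 1) with h2 | h2
  · have hs : Real.sin x = Real.cos (x - π/2) := by
      rw [Real.cos_sub_pi_div_two]
    have hc : 1 - (x - π/2) ^ 2 / 2 ≤ Real.cos (x - π/2) :=
      Real.one_sub_sq_div_two_le_cos
    nlinarith [sq_nonneg (x - π/2), sq_nonneg (x-1), sq_nonneg (x - π + 1)]
  rcases lt_or_ge x π with h3 | h3
  · have ht : Real.sin x = Real.sin (π - x) := (Real.sin_pi_sub x).symm
    have ht0 : 0 < π - x := by linarith
    have ht1 : π - x ≤ 1 := by linarith
    have := Real.sin_gt_sub_cube ht0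
    nlinarith [sq_nonneg (π - x), pow_pos ht0 3]
  · have hs : Real.sin x = -Real.sin (x - π) := by
      rw [Real.sin_sub_pi]; ring
    have := Real.sin_le (by linarith : (0:ℝ) ≤ x - π)
    nlinarith [sq_nonneg (x - π)]

theorem sup_x_minus_sin_over_sq :
    (∀ x : ℝ, 0 < x → (x - Real.sin x) / x ^ 2 ≤ 1 / Real.pi) ∧
    (Real.pi - Real.sin Real.pi) / Real.pi ^ 2 = 1 / Real.pi ∧
    sSup {y : ℝ | ∃ x : ℝ, 0 < x ∧ y = 2 * (x - Real.sin x) / x ^ 2} = 2 / Real.pi := by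
  have hpi := Real.pi_pos
  refine ⟨key_ineq, ?_, ?_⟩
  · rw [Real.sin_pi]
    field_simp
    ring
  · have hub : ∀ y ∈ {y : ℝ | ∃ x : ℝ, 0 < x ∧ y = 2 * (x - Real.sin x) / x ^ 2},
        y ≤ 2 / π := by
      rintro y ⟨x, hx, rfl⟩
      have := key_ineq x hx
      rw [mul_div_assoc]
      calc 2 * ((x - Real.sin x) / x ^ 2) ≤ 2 * (1/π) := by linarith
        _ = 2 / π := by ring
    have hmem : (2 : ℝ) / π ∈ {y : ℝ | ∃ x : ℝ, 0 < x ∧ y = 2 * (x - Real.sin x) / x ^ 2} := by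
      exact ⟨π, hpi, by rw [Real.sin_pi]; field_simp; ring⟩
    exact le_antisymm (csSup_le ⟨_, hmem⟩ hub) (le_csSup ⟨2/π, hub⟩ hmem)
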